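/- There exists an N-free ultrafilter F on the positive natural numbers that is ∼∣-maximal among N-free ultrafilters: for every N-free ultrafilter G on ℕ₊, G ∼∣ F. -/

import Mathlib

/-- A set of positive naturals is upward closed under divisibility. -/
def upClosed (A : Set ℕ+) : Prop := ∀ a ∈ A, ∀ n : ℕ+, a ∣ n → n ∈ A

/-- The divisibility relation `∼∣` on ultrafilters: `F ∩ U ⊆ G`. -/
def sdvd (F G : Ultrafilter ℕ+) : Prop := ∀ A : Set ℕ+, A ∈ F → upClosed A → A ∈ G

/-- The product ultrafilter: `A ∈ F·G ↔ {n | {m | m*n ∈ A} ∈ G} ∈ F`. -/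
def mulUF (F G : Ultrafilter ℕ+) : Ultrafilter ℕ+ :=
  F.bind (fun n => G.map (fun m => m * n))

/-- `D(F) = {A | {n | nℕ₊ ⊆ A} ∈ F}`. -/
def DF (F : Ultrafilter ℕ+) : Set (Set ℕ+) :=
  {A | {n : ℕ+ | ∀ m : ℕ+, n * m ∈ A} ∈ F}

/-- A strong antichain: pairwise coprime elements. -/
def strongAntichain (X : Set ℕ+) : Prop :=
  X.Pairwise (fun a b => Nat.Coprime (a : ℕ) (b : ℕ))

/-- An N-free ultrafilter contains no `nℕ₊` with `n ≠ 1`. -/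
def NfreeUF (F : Ultrafilter ℕ+) : Prop :=
  ∀ n : ℕ+, n ≠ 1 → {m : ℕ+ | n ∣ m} ∉ F

/-- Helper coprimality step. -/
lemma coprime_step {a n p : ℕ} (hp : p.Prime) (hpn : p ∣ n)
    (h1 : Nat.Coprime a (n / p)) (h2 : ¬ p ∣ a) : Nat.Coprime a n := by
  by_contra h
  obtain ⟨q, hq, hqd⟩ := Nat.exists_prime_and_dvd h
  have hqa : q ∣ a := hqd.trans (Nat.gcd_dvd_left _ _)
  have hqn : q ∣ n := hqd.trans (Nat.gcd_dvd_right _ _)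
  have hqp : q ≠ p := by rintro rfl; exact h2 hqa
  have hn : n = p * (n / p) := (Nat.mul_div_cancel' hpn).symm
  have hqm : q ∣ n / p := by
    rcases (Nat.Prime.dvd_mul hq).mp (hn ▸ hqn) with h' | h'
    · exact absurd ((Nat.prime_dvd_prime_iff_eq hq hp).mp h') hqp
    · exact h'
  exact hq.one_lt.ne' (Nat.eq_one_of_dvd_coprimes h1 hqa hqm)

/-- In an N-free ultrafilter, the set of numbers coprime to any fixed `n ≠ 0` is large. -/
lemma coprime_mem (G : Ultrafilter ℕ+) (hG : NfreeUF G) :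
    ∀ n : ℕ, n ≠ 0 → {a : ℕ+ | Nat.Coprime (a : ℕ) n} ∈ G := by
  intro n
  induction n using Nat.strong_induction_on with
  | _ n ih =>
    intro hn
    rcases eq_or_ne n 1 with rfl | hn1
    · have : {a : ℕ+ | Nat.Coprime (a : ℕ) 1} = Set.univ := by
        ext a; simp [Nat.coprime_one_right]
      rw [this]; exact Filter.univ_mem
    obtain ⟨p, hp, hpn⟩ := Nat.exists_prime_and_dvd hn1
    set m := n / p with hm
    have hmne : m ≠ 0 := by
      intro h
      exact hn (by rw [← Nat.mul_div_cancel' hpn, ← hm, h, mul_zero])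
    have hmlt : m < n := Nat.div_lt_self (Nat.pos_of_ne_zero hn) hp.one_lt
    have hS1 : {a : ℕ+ | Nat.Coprime (a : ℕ) m} ∈ G := ih m hmlt hmne
    -- the set of a not divisible by p is in G
    set P : ℕ+ := ⟨p, hp.pos⟩ with hP
    have hPne : P ≠ 1 := by
      intro h
      have : (P : ℕ) = 1 := by rw [h]; rfl
      exact hp.one_lt.ne' this
    have hS2 : {a : ℕ+ | ¬ (p ∣ (a : ℕ))} ∈ G := by
      have h1 := hG P hPne
      have h2 : {a : ℕ+ | P ∣ a}ᶜ ∈ G := Ultrafilter.compl_mem_iff_notMem.mpr h1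
      have : {a : ℕ+ | ¬ (p ∣ (a : ℕ))} = {a : ℕ+ | P ∣ a}ᶜ := by
        ext a
        simp only [Set.mem_setOf_eq, Set.mem_compl_iff, PNat.dvd_iff]
        rfl
      rw [this]; exact h2
    refine Filter.mem_of_superset (Filter.inter_mem hS1 hS2) ?_
    rintro a ⟨h1, h2⟩
    exact coprime_step hp hpn h1 h2

theorem exists_NMAX :
    ∃ F : Ultrafilter ℕ+, NfreeUF F ∧
      ∀ G : Ultrafilter ℕ+, NfreeUF G → sdvd G F := by
  classical
  set T1 : Set (Set ℕ+) :=
    {A | upClosed A ∧ ∃ G : Ultrafilter ℕ+, NfreeUF G ∧ A ∈ G} with hT1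
  set T2 : Set (Set ℕ+) :=
    {A | ∃ n : ℕ+, n ≠ 1 ∧ A = {m : ℕ+ | n ∣ m}ᶜ} with hT2
  set S : Set (Set ℕ+) := T1 ∪ T2 with hS
  -- Phase 1: finite subsets of T2 are handled by a single coprimality condition
  have phase1 : ∀ t : Set (Set ℕ+), t.Finite → t ⊆ T2 →
      ∃ N : ℕ, N ≠ 0 ∧ ∀ a : ℕ+, Nat.Coprime (a : ℕ) N → ∀ A ∈ t, a ∈ A := by
    intro t ht
    refine Set.Finite.induction_on
      (motive := fun t _ => t ⊆ T2 →
        ∃ N : ℕ, N ≠ 0 ∧ ∀ a : ℕ+, Nat.Coprime (a : ℕ) N → ∀ A ∈ t, a ∈ A) t ht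
      (fun _ => ⟨1, one_ne_zero, fun a _ A hA => absurd hA (Set.notMem_empty A)⟩) ?_
    intro B s hBt htfin ih hsub
    obtain ⟨N, hN0, hN⟩ := ih (fun A hA => hsub (Set.mem_insert_of_mem _ hA))
    obtain ⟨n, hn1, hBn⟩ := hsub (Set.mem_insert _ _)
    refine ⟨N * (n : ℕ), mul_ne_zero hN0 n.ne_zero, ?_⟩
    intro a ha A hA
    have haN : Nat.Coprime (a : ℕ) N := Nat.Coprime.coprime_dvd_right ⟨(n : ℕ), rfl⟩ ha
    have han : Nat.Coprime (a : ℕ) (n : ℕ) :=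
      Nat.Coprime.coprime_dvd_right ⟨N, mul_comm N (n : ℕ)⟩ ha
    rcases Set.mem_insert_iff.mp hA with rfl | hA
    · rw [hBn]
      intro hcon
      have : (n : ℕ) ∣ (a : ℕ) := PNat.dvd_iff.mp hcon
      have : (n : ℕ) = 1 := Nat.eq_one_of_dvd_coprimes han.symm dvd_rfl this
      exact hn1 (PNat.coe_eq_one_iff.mp this)
    · exact hN a haN A hA
  -- Phase 2: finite subsets of T1 have elements coprime to any N ≠ 0
  have phase2 : ∀ t : Set (Set ℕ+), t.Finite → t ⊆ T1 →
      ∀ N : ℕ, N ≠ 0 → ∃ a : ℕ+, Nat.Coprime (a : ℕ) N ∧ ∀ A ∈ t, a ∈ A := by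
    intro t ht
    refine Set.Finite.induction_on
      (motive := fun t _ => t ⊆ T1 → ∀ N : ℕ, N ≠ 0 →
        ∃ a : ℕ+, Nat.Coprime (a : ℕ) N ∧ ∀ A ∈ t, a ∈ A) t ht
      (fun _ N hN =>
        ⟨1, by simp, fun A hA => absurd hA (Set.notMem_empty A)⟩) ?_
    intro B s hBt htfin ih hsub N hN
    obtain ⟨a, haN, ha⟩ := ih (fun A hA => hsub (Set.mem_insert_of_mem _ hA)) N hN
    obtain ⟨hBup, G, hGfree, hBG⟩ := hsub (Set.mem_insert _ _)
    -- pick b ∈ B coprime to N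
    have hco := coprime_mem G hGfree N hN
    have hne : (B ∩ {x : ℕ+ | Nat.Coprime (x : ℕ) N}).Nonempty :=
      Ultrafilter.nonempty_of_mem (Filter.inter_mem hBG hco)
    obtain ⟨b, hbB, hbN⟩ := hne
    refine ⟨b * a, ?_, ?_⟩
    · have : ((b * a : ℕ+) : ℕ) = (b : ℕ) * (a : ℕ) := PNat.mul_coe b a
      rw [this]
      exact Nat.Coprime.mul hbN haN
    · intro A hA
      rcases Set.mem_insert_iff.mp hA with rfl | hA
      · exact hBup b hbB _ ⟨a, rfl⟩
      · obtain ⟨hAup, _⟩ := hsub (Set.mem_insert_of_mem _ hA)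
        exact hAup a (ha A hA) _ ⟨b, mul_comm b a⟩
  -- The generated filter is proper
  have hne : (Filter.generate S).NeBot := by
    rw [Filter.generate_neBot_iff]
    intro t hts htfin
    set t1 := t ∩ T1 with ht1
    set t2 := t \ T1 with ht2
    have ht2sub : t2 ⊆ T2 := by
      rintro A ⟨hAt, hAn⟩
      rcases hts hAt with h | h
      · exact absurd h hAn
      · exact h
    obtain ⟨N, hN0, hN⟩ := phase1 t2 (htfin.subset Set.diff_subset) ht2sub
    obtain ⟨a, haN, ha⟩ :=
      phase2 t1 (htfin.subset Set.inter_subset_left) Set.inter_subset_right N hN0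
    refine ⟨a, ?_⟩
    rw [Set.mem_sInter]
    intro A hA
    by_cases hA1 : A ∈ T1
    · exact ha A ⟨hA, hA1⟩
    · exact hN a haN A ⟨hA, hA1⟩
  letI := hne
  refine ⟨Ultrafilter.of (Filter.generate S), ?_, ?_⟩
  · -- N-free
    intro n hn1 hcon
    have hmem : {m : ℕ+ | n ∣ m}ᶜ ∈ Ultrafilter.of (Filter.generate S) :=
      Ultrafilter.of_le (Filter.generate S)
        (Filter.mem_generate_of_mem (Or.inr ⟨n, hn1, rfl⟩))
    exact Ultrafilter.compl_mem_iff_notMem.mp hmem hcon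
  · intro G hG A hAG hAup
    exact Ultrafilter.of_le (Filter.generate S)
      (Filter.mem_generate_of_mem (Or.inl ⟨hAup, G, hG, hAG⟩))
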